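/- (Symmetric version.) Let α̂ ∈ ℝ^d be any vector with b̂(z) := ∑_j α̂_j φ_j(z), and let â : Z → ℝ be any function. Let α̃ satisfy (1/n)∑_i [S_i·â(z_i)·(α̃ᵀφ(z_i)) + m1(O_i, â)] = 0. Define δ_j := [(1/n)∑_i (−S_i)·â(z_i)·φ_j(z_i)] / [(1/n)∑_i m2(O_i, φ_j)], assumed well-defined, and set α̃_aug,j := (1−δ_j)α̂_j + δ_j α̃_j, b̃_aug(z) := ∑_j α̃_aug,j φ_j(z). Then the one-step estimator χ̂(â,b̂) equals the IPW-type estimator (1/n)∑_i m2(O_i, b̃_aug). -/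

import Mathlib

theorem stmt_6 {Z : Type*} (n d : ℕ) (S : Fin n → ℝ) (z : Fin n → Z)
    (φ : Fin d → Z → ℝ) (m1 m2 : Fin n → (Z → ℝ) → ℝ)
    (hm1 : ∀ i (c : ℝ) (f g : Z → ℝ),
      m1 i (fun x => c * f x + g x) = c * m1 i f + m1 i g)
    (hm2 : ∀ i (c : ℝ) (f g : Z → ℝ),
      m2 i (fun x => c * f x + g x) = c * m2 i f + m2 i g)
    (hden : ∀ j, (1 / (n : ℝ)) * ∑ i, m2 i (φ j) ≠ 0)
    (αh : Fin d → ℝ) (bhat : Z → ℝ) (hbhat : ∀ x, bhat x = ∑ j, αh j * φ j x)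
    (ahat : Z → ℝ) (αt : Fin d → ℝ)
    (hαt : (1 / (n : ℝ)) * ∑ i,
      (S i * ahat (z i) * (∑ j, αt j * φ j (z i)) + m1 i ahat) = 0)
    (δ : Fin d → ℝ)
    (hδ : ∀ j, δ j = ((1 / (n : ℝ)) * ∑ i, (-S i) * ahat (z i) * φ j (z i))
        / ((1 / (n : ℝ)) * ∑ i, m2 i (φ j)))
    (αaug : Fin d → ℝ) (hαaug : ∀ j, αaug j = (1 - δ j) * αh j + δ j * αt j)
    (baug : Z → ℝ) (hbaug : ∀ x, baug x = ∑ j, αaug j * φ j x) :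
    (1 / (n : ℝ)) * ∑ i, (S i * ahat (z i) * bhat (z i) + m1 i ahat + m2 i bhat)
      = (1 / (n : ℝ)) * ∑ i, m2 i baug := by
  -- linearity of m2 over finite sums
  have hsum : ∀ i (c : Fin d → ℝ),
      m2 i (fun x => ∑ j, c j * φ j x) = ∑ j, c j * m2 i (φ j) := by
    intro i c
    have hz : m2 i (fun _ => (0:ℝ)) = 0 := by
      have h := hm2 i 1 (fun _ => 0) (fun _ => 0)
      simp only [one_mul, mul_zero, add_zero, zero_add] at h
      linarith
    have key : ∀ s : Finset (Fin d),
        m2 i (fun x => ∑ j ∈ s, c j * φ j x) = ∑ j ∈ s, c j * m2 i (φ j) := by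
      intro s
      induction s using Finset.induction_on with
      | empty => simpa using hz
      | insert a s hj ih =>
        simp only [Finset.sum_insert hj]
        rw [hm2 i (c a) (φ a) (fun x => ∑ j ∈ s, c j * φ j x), ih]
    exact key Finset.univ
  set N : ℝ := (1 / (n : ℝ)) with hN
  set A : Fin d → ℝ := fun j => ∑ i, S i * ahat (z i) * φ j (z i) with hA
  set M : Fin d → ℝ := fun j => ∑ i, m2 i (φ j) with hM
  have hδ' : ∀ j, δ j * (N * M j) = N * (-A j) := by
    intro j
    rw [hδ j]
    have : (∑ i, (-S i) * ahat (z i) * φ j (z i)) = -A j := by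
      simp [hA, Finset.sum_neg_distrib, neg_mul]
    rw [this]
    exact div_mul_cancel₀ _ (hden j)
  -- rewrite m2 terms
  have hbhat' : ∀ i, m2 i bhat = ∑ j, αh j * m2 i (φ j) := by
    intro i
    rw [show bhat = fun x => ∑ j, αh j * φ j x from funext hbhat]
    exact hsum i αh
  have hbaug' : ∀ i, m2 i baug = ∑ j, αaug j * m2 i (φ j) := by
    intro i
    rw [show baug = fun x => ∑ j, αaug j * φ j x from funext hbaug]
    exact hsum i αaug
  have hswap : ∀ (c : Fin d → ℝ) (f : Fin n → Fin d → ℝ),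
      (∑ i, ∑ j, c j * f i j) = ∑ j, c j * ∑ i, f i j := by
    intro c f
    rw [Finset.sum_comm]
    simp [Finset.mul_sum]
  -- LHS expansion
  have hL : (∑ i, (S i * ahat (z i) * bhat (z i) + m1 i ahat + m2 i bhat))
      = (∑ j, αh j * A j) + (∑ i, m1 i ahat) + (∑ j, αh j * M j) := by
    rw [Finset.sum_add_distrib, Finset.sum_add_distrib]
    congr 1
    · congr 1
      have : ∀ i, S i * ahat (z i) * bhat (z i)
          = ∑ j, αh j * (S i * ahat (z i) * φ j (z i)) := by
        intro i
        rw [hbhat (z i), Finset.mul_sum]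
        exact Finset.sum_congr rfl (fun j _ => by ring)
      rw [Finset.sum_congr rfl (fun i _ => this i), hswap]
    · rw [Finset.sum_congr rfl (fun i _ => hbhat' i), hswap]
  have hαt' : N * ((∑ j, αt j * A j) + ∑ i, m1 i ahat) = 0 := by
    rw [← hαt]
    congr 1
    rw [Finset.sum_add_distrib]
    congr 1
    have : ∀ i, S i * ahat (z i) * (∑ j, αt j * φ j (z i))
        = ∑ j, αt j * (S i * ahat (z i) * φ j (z i)) := by
      intro i
      rw [Finset.mul_sum]
      exact Finset.sum_congr rfl (fun j _ => by ring)
    rw [Finset.sum_congr rfl (fun i _ => this i), hswap]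
  -- RHS expansion
  have hR : N * (∑ i, m2 i baug) = ∑ j, (N * (αh j * M j) + (αt j - αh j) * (N * (-A j))) := by
    rw [Finset.sum_congr rfl (fun i _ => hbaug' i), hswap, Finset.mul_sum]
    refine Finset.sum_congr rfl (fun j _ => ?_)
    rw [hαaug j]
    linear_combination (αt j - αh j) * hδ' j
  rw [hL, hR]
  rw [Finset.sum_add_distrib]
  have e1 : (∑ j, (αt j - αh j) * (N * (-A j)))
      = -(N * ∑ j, αt j * A j) + N * ∑ j, αh j * A j := by
    rw [Finset.mul_sum, Finset.mul_sum, ← Finset.sum_neg_distrib, ← Finset.sum_add_distrib]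
    exact Finset.sum_congr rfl (fun j _ => by ring)
  rw [e1]
  have e2 : N * ∑ j, αt j * A j = -(N * ∑ i, m1 i ahat) := by linarith [hαt']
  rw [e2]
  have e3 : (∑ j, N * (αh j * M j)) = N * ∑ j, αh j * M j := (Finset.mul_sum _ _ _).symm
  rw [e3]
  ring
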